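/- arXiv:1107.2091 — 2 statements merged into one kernel-verified Lean document; each statement's English description precedes it below -/
import Mathlib

section
/- Let A = (Q, Σ, {M_a}, α) be a finite probabilistic table and w ∈ Σ^ω an infinite word. For every event Γ in the tail σ-field F_∞ there exists a sequence (L_n)_{n∈ℕ} of subsets of Q such that the P^w-measure of the symmetric difference between the event {r ∈ Ω : r(n) ∈ L_n} and Γ tends to 0 as n → ∞. -/
open Filter Topology MeasureTheory

namespace PAut

/-- A finite probabilistic table: row-stochastic matrices indexed by letters,
together with an initial distribution. -/
structure FPT (Q : Type*) (A : Type*) [Fintype Q] where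
  M : A → Q → Q → ℝ
  M_nonneg : ∀ a q q', 0 ≤ M a q q'
  M_row : ∀ a q, ∑ q', M a q q' = 1
  init : Q → ℝ
  init_nonneg : ∀ q, 0 ≤ init q
  init_sum : ∑ q, init q = 1

variable {Q A : Type*} [Fintype Q] [DecidableEq Q]

/-- `β` is a probability distribution on `Q`. -/
def IsDist (β : Q → ℝ) : Prop := (∀ q, 0 ≤ β q) ∧ ∑ q, β q = 1

/-- The matrix `M_ρ` of a finite word `ρ`. -/
def Mword (T : FPT Q A) : List A → Q → Q → ℝ
  | [], q, q' => if q = q' then 1 else 0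
  | a :: ρ, q, q' => ∑ x, T.M a q x * Mword T ρ x q'

/-- `δ(β,ρ)`: the distribution after reading `ρ` from initial distribution `β`. -/
def delta (T : FPT Q A) (β : Q → ℝ) (ρ : List A) : Q → ℝ :=
  fun q => ∑ q', β q' * Mword T ρ q' q

/-- Support of a distribution. -/
def supp (β : Q → ℝ) : Set Q := {q | β q ≠ 0}

/-- `H·ρ` : states reachable with positive probability from `H` reading `ρ`. -/
def act (T : FPT Q A) (H : Set Q) (ρ : List A) : Set Q :=
  {q | ∃ q' ∈ H, 0 < Mword T ρ q' q}

/-- One step of the homogeneous chain induced on `S` by the word `ρ`. -/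
def stepRel (T : FPT Q A) (S : Set Q) (ρ : List A) (x y : Q) : Prop :=
  x ∈ S ∧ y ∈ S ∧ 0 < Mword T ρ x y

/-- `S·ρ^#` : the recurrent states of the homogeneous chain induced on `S` by `ρ`. -/
def hashSet (T : FPT Q A) (S : Set Q) (ρ : List A) : Set Q :=
  {s | s ∈ S ∧ ∀ t, Relation.ReflTransGen (stepRel T S ρ) s t →
        Relation.ReflTransGen (stepRel T S ρ) t s}

/-- `(S,ρ)` is a `#`-reduction. -/
def IsHashReduction (T : FPT Q A) (S : Set Q) (ρ : List A) : Prop :=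
  act T S ρ = S ∧ hashSet T S ρ ≠ S

/-- The execution tree `(β,ρ)` (finite word) is chain recurrent. -/
def ChainRecFin (T : FPT Q A) (β : Q → ℝ) (ρ : List A) : Prop :=
  ∀ ρ₁ ρ₂ : List A, (ρ₁ ++ ρ₂) <+: ρ →
    ¬ IsHashReduction T (supp (delta T β ρ₁)) ρ₂

/-- `l` is a prefix of the infinite word `w`. -/
def PrefixOf (l : List A) (w : ℕ → A) : Prop :=
  ∀ (i : ℕ) (h : i < l.length), l.get ⟨i, h⟩ = w i

/-- The execution tree `(β,w)` (infinite word) is chain recurrent. -/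
def ChainRecInf (T : FPT Q A) (β : Q → ℝ) (w : ℕ → A) : Prop :=
  ∀ ρ₁ ρ₂ : List A, PrefixOf (ρ₁ ++ ρ₂) w →
    ¬ IsHashReduction T (supp (delta T β ρ₁)) ρ₂

/-- `w[1..n]` : the prefix of length `n` of the infinite word `w`. -/
def wordPrefix (w : ℕ → A) (n : ℕ) : List A := (List.range n).map w

/-- `w[n₁+1..n₂]` : the letters of `w` read between time `n₁` and time `n₂`. -/
def wordSegment (w : ℕ → A) (n₁ n₂ : ℕ) : List A :=
  (List.range (n₂ - n₁)).map fun j => w (n₁ + j)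

/-- `μ_n^w = δ(α, w[1..n])` : the induced process on `Q`. -/
def muDist (T : FPT Q A) (w : ℕ → A) (n : ℕ) : Q → ℝ :=
  delta T T.init (wordPrefix w n)

/-- A process `μ` on `Q` is simple: a partition `(Aₙ, Aₙᶜ)` of `Q`,
with mass `> λ` on each point of `Aₙ` and total mass of `Aₙᶜ` going to `0`. -/
def SimpleProcess (μ : ℕ → Q → ℝ) : Prop :=
  ∃ lam : ℝ, 0 < lam ∧ ∃ Aset : ℕ → Finset Q,
    (∀ n, ∀ q ∈ Aset n, lam < μ n q) ∧
    Tendsto (fun n => ∑ q ∈ (Aset n)ᶜ, μ n q) atTop (𝓝 0)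

open Classical in
/-- `β(F)` : the mass a distribution gives to a set of states. -/
noncomputable def massOn (β : Q → ℝ) (F : Set Q) : ℝ :=
  ∑ q : Q, if q ∈ F then β q else 0

open Classical in
/-- The uniform distribution on a set of states. -/
noncomputable def unif (D : Set Q) : Q → ℝ :=
  fun q => if q ∈ D then 1 / (Nat.card D : ℝ) else 0

/-- The Dirac distribution at a state. -/
def dirac (q : Q) : Q → ℝ := fun q' => if q' = q then 1 else 0

/-- `ε(A)` : the smallest nonzero transition probability of the automaton. -/
noncomputable def minProb (T : FPT Q A) : ℝ :=
  sInf {x : ℝ | 0 < x ∧ ∃ a q q', T.M a q q' = x}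

/-! ### Linked graphs -/

/-- Left endpoints of a bipartite graph. -/
def lgA (G : Set (Q × Q)) : Set Q := Prod.fst '' G

/-- Right endpoints of a bipartite graph. -/
def lgB (G : Set (Q × Q)) : Set Q := Prod.snd '' G

/-- The linking condition for a sequence of bipartite graphs. -/
def IsLinked (l : List (Set (Q × Q))) : Prop :=
  List.Chain' (fun G H => lgB G = lgA H) l

/-- Origin of a linked graph. -/
def lgOrg : List (Set (Q × Q)) → Set Q
  | [] => ∅
  | G :: _ => lgA G

/-- Destination of a linked graph. -/
def lgDest : List (Set (Q × Q)) → Set Q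
  | [] => ∅
  | [G] => lgB G
  | _ :: G :: l => lgDest (G :: l)

/-- Destination, with a default value for the empty linked graph. -/
def lgDestD (S : Set Q) : List (Set (Q × Q)) → Set Q
  | [] => S
  | l => lgDest l

/-- Compaction of a linked graph, as a relation on `Q`. -/
def compRel : List (Set (Q × Q)) → Set (Q × Q)
  | [] => {p | p.1 = p.2}
  | [G] => G
  | G :: H :: l => {p | ∃ t, (p.1, t) ∈ G ∧ (t, p.2) ∈ compRel (H :: l)}

/-- Reachability in a graph given as a set of edges. -/
def grReach (C : Set (Q × Q)) (s t : Q) : Prop :=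
  Relation.ReflTransGen (fun a b => (a, b) ∈ C) s t

/-- `Rec(I)` : the recurrent states of the compaction of a linked graph. -/
def recSet (l : List (Set (Q × Q))) : Set Q :=
  {s | s ∈ lgOrg l ∧ ∀ t, grReach (compRel l) s t → grReach (compRel l) t s}

/-- `Rec(s,I)` : the recurrent states reachable from `s` in the compaction. -/
def recFrom (s : Q) (l : List (Set (Q × Q))) : Set Q :=
  {t | t ∈ recSet l ∧ grReach (compRel l) s t}

/-- Restrict each graph of a linked graph to the sources reachable from `S`. -/
def restrictFrom (S : Set Q) : List (Set (Q × Q)) → List (Set (Q × Q))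
  | [] => []
  | G :: l => ({p | p ∈ G ∧ p.1 ∈ S} : Set (Q × Q)) ::
      restrictFrom (lgB ({p | p ∈ G ∧ p.1 ∈ S} : Set (Q × Q))) l

/-- `(i₁,i₂)` (0-indexed) is a border of the linked graph `l`. -/
def IsBorder (l : List (Set (Q × Q))) (i₁ i₂ : ℕ) : Prop :=
  i₁ < i₂ ∧ i₂ < l.length ∧ lgB (l.getD i₂ ∅) ⊆ lgA (l.getD i₁ ∅)

/-- The action of a border `(i₁,i₂)` (0-indexed) on a linked graph. -/
def borderAct (l : List (Set (Q × Q))) (i₁ i₂ : ℕ) : List (Set (Q × Q)) :=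
  let p := i₁ - 1
  let seg := (l.drop i₁).take (i₂ + 1 - i₁)
  let pre := l.take p
  let S := lgDestD (lgOrg l) pre
  let Gspec : Set (Q × Q) := {pr | pr.1 ∈ S ∧ pr.2 ∈ recFrom pr.1 seg}
  pre ++ Gspec :: restrictFrom (lgB Gspec) (l.drop (p + 1))

/-- Action of a chain of borders on a linked graph. -/
def borderChainAct : List (ℕ × ℕ) → List (Set (Q × Q)) → List (Set (Q × Q))
  | [], l => l
  | b :: bs, l => borderChainAct bs (borderAct l b.1 b.2)

/-- `B` is a chain of borders on the linked graph `l`. -/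
def IsBorderChain : List (ℕ × ℕ) → List (Set (Q × Q)) → Prop
  | [], _ => True
  | b :: bs, l => IsBorder l b.1 b.2 ∧ IsBorderChain bs (borderAct l b.1 b.2)

/-- `LG(ρ, S, T)` : the linked graph induced by reading `ρ` from `S`. -/
def lgOf (T : FPT Q A) (S : Set Q) : List A → List (Set (Q × Q))
  | [] => []
  | a :: ρ => ({p | p.1 ∈ S ∧ 0 < T.M a p.1 p.2} : Set (Q × Q)) ::
      lgOf T (lgB ({p | p.1 ∈ S ∧ 0 < T.M a p.1 p.2} : Set (Q × Q))) ρ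

/-- `C →^{#-ρ} D`. -/
def HashRho (T : FPT Q A) (ρ : List A) (C D : Set Q) : Prop :=
  ∃ B : List (ℕ × ℕ), IsBorderChain B (lgOf T C ρ) ∧
    lgDestD C (borderChainAct B (lgOf T C ρ)) = D

/-- `C →^{#} D`. -/
def Hash (T : FPT Q A) (C D : Set Q) : Prop := ∃ ρ : List A, HashRho T ρ C D

/-- Structurally simple probabilistic automaton. -/
def StructSimple (T : FPT Q A) : Prop :=
  ∀ (ρ : List A) (C D : Set Q),
    D ⊆ C → HashRho T ρ C D →
    (∀ D' : Set Q, HashRho T ρ C D' → D' ⊆ D → D' = D) →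
    ChainRecFin T (unif D) ρ

/-- `C →^{#-ρ-I} D`. -/
def HashIRho (T : FPT Q A) (ρ : List A) (C : Set Q) (I : Set (Q × Q)) (D : Set Q) : Prop :=
  ∃ B : List (ℕ × ℕ), IsBorderChain B (lgOf T C ρ) ∧
    ∃ i : ℕ, 1 ≤ i ∧ i ≤ ρ.length ∧
      compRel ((borderChainAct B (lgOf T C ρ)).take i) = I ∧
      lgDest ((borderChainAct B (lgOf T C ρ)).take i) = D

/-- Edge of the extended support graph. -/
def ESGEdge (T : FPT Q A) (C D : Set Q) : Prop :=
  ∃ (I : Set (Q × Q)) (ρ : List A), HashIRho T ρ C I D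

/-- Reachability in the extended support graph. -/
def ESGReach (T : FPT Q A) : Set Q → Set Q → Prop :=
  Relation.ReflTransGen (ESGEdge T)

/-- A subsequence of recurrent execution trees of the execution tree `(β, w)`. -/
structure RecSeqOf (T : FPT Q A) (β : Q → ℝ) (w : ℕ → A) where
  k : ℕ
  βs : Fin (k + 1) → Q → ℝ
  ρs : Fin k → List A
  ρ's : Fin k → List A
  wlast : ℕ → A
  dists : ∀ i, IsDist (βs i)
  first_eq : βs 0 = β
  supp_sub : ∀ i : Fin k,
    supp (βs i.succ) ⊆ supp (delta T (βs i.castSucc) (ρs i ++ ρ's i))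
  chainrec : ∀ i : Fin k, ChainRecFin T (βs i.castSucc) (ρs i)
  chainrec_last : ChainRecInf T (βs (Fin.last k)) wlast
  decomp_prefix : PrefixOf ((List.ofFn fun i : Fin k => ρs i ++ ρ's i).flatten) w
  decomp_tail : ∀ n : ℕ,
    w (((List.ofFn fun i : Fin k => ρs i ++ ρ's i).flatten).length + n) = wlast n

/-- The length of a sequence of recurrent execution trees. -/
def RecSeqOf.len {T : FPT Q A} {β : Q → ℝ} {w : ℕ → A} (r : RecSeqOf T β w) : ℕ :=
  ∑ i, (r.ρ's i).length

/-- `w` is a lasso shape word `ρ₁ · ρ₂^ω` with `ρ₂` nonempty. -/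
def IsLasso (w : ℕ → A) : Prop :=
  ∃ ρ₁ ρ₂ : List A, ρ₂ ≠ [] ∧
    (∀ n : ℕ, n < ρ₁.length → ρ₁[n]? = some (w n)) ∧
    (∀ n : ℕ, ρ₁.length ≤ n → ρ₂[(n - ρ₁.length) % ρ₂.length]? = some (w n))

/-- The periodic word `ρ^ω`. -/
def periodicWord (ρ : List A) (h : ρ ≠ []) : ℕ → A :=
  fun n => ρ.get ⟨n % ρ.length, Nat.mod_lt n (List.length_pos_iff.mpr h)⟩

/-- States visited infinitely often by a run. -/
def infOcc (r : ℕ → Q) : Set Q := {q | ∀ N : ℕ, ∃ n, N ≤ n ∧ r n = q}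

/-- The parity acceptance condition for a priority function `p`. -/
def parityEvent (p : Q → ℕ) : Set (ℕ → Q) := {r | Even (sInf (p '' infOcc r))}

/-! ### The induced measure on runs -/

/-- Probability of a cylinder of length `n+1` for the chain started in `β` reading `w`. -/
def cylProb (T : FPT Q A) (β : Q → ℝ) (w : ℕ → A) (n : ℕ) (f : Fin (n + 1) → Q) : ℝ :=
  β (f 0) * ∏ i : Fin n, T.M (w i) (f i.castSucc) (f i.succ)

/-- `μ` is the probability measure `P^w` induced on runs by the chain started
in `β` reading `w`. -/
def IsMarkovMeasure [MeasurableSpace Q] (T : FPT Q A) (β : Q → ℝ) (w : ℕ → A)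
    (μ : Measure (ℕ → Q)) : Prop :=
  IsProbabilityMeasure μ ∧
    ∀ (n : ℕ) (f : Fin (n + 1) → Q),
      μ {r | ∀ i : Fin (n + 1), r i = f i} = ENNReal.ofReal (cylProb T β w n f)

/-- `F_n` : the σ-field generated by the coordinates `X_m`, `m ≥ n`. -/
def futureField (Q : Type*) [m : MeasurableSpace Q] (n : ℕ) : MeasurableSpace (ℕ → Q) :=
  ⨆ k, ⨆ _ : n ≤ k, MeasurableSpace.comap (fun r : ℕ → Q => r k) m

/-- `F_∞` : the tail σ-field. -/
def tailField (Q : Type*) [MeasurableSpace Q] : MeasurableSpace (ℕ → Q) :=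
  ⨅ n : ℕ, futureField Q n

/-- `Γ` is an atomic event of the σ-field `m` for the measure `μ`. -/
def IsAtomIn {Q : Type*} [MeasurableSpace Q] (μ : Measure (ℕ → Q))
    (m : MeasurableSpace (ℕ → Q)) (Γ : Set (ℕ → Q)) : Prop :=
  0 < μ Γ ∧ ∀ Γ' : Set (ℕ → Q), MeasurableSet[m] Γ' → Γ' ⊆ Γ → μ Γ' = 0 ∨ μ Γ' = μ Γ

/-- `τ^i_∞` : runs that eventually stay in the jet `J^i`. -/
def tauInf {Q : Type*} {c : ℕ} (J : Fin (c + 1) → ℕ → Set Q) (i : Fin (c + 1)) :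
    Set (ℕ → Q) :=
  {r | ∃ N : ℕ, ∀ n, N ≤ n → r n ∈ J i n}

/-- `(J^0,...,J^c)` is a partition of `Q^ω` into jets. -/
def JetPartition {Q : Type*} {c : ℕ} (J : Fin (c + 1) → ℕ → Set Q) : Prop :=
  ∀ (n : ℕ) (q : Q), ∃! i : Fin (c + 1), q ∈ J i n

/-- Absorption: almost every run eventually enters one of the jets `J^i`, `i ≥ 1`,
and stays there forever. -/
def Absorbing {Q : Type*} [MeasurableSpace Q] {c : ℕ} (μ : Measure (ℕ → Q))
    (J : Fin (c + 1) → ℕ → Set Q) : Prop :=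
  μ {r | ∃ i : Fin (c + 1), i ≠ 0 ∧ ∃ N : ℕ, ∀ n, N ≤ n → r n ∈ J i n} = 1

/-- Conditional probability `μ(E | F)`. -/
noncomputable def condProb {Q : Type*} [MeasurableSpace Q] (μ : Measure (ℕ → Q))
    (E F : Set (ℕ → Q)) : ℝ :=
  (μ (E ∩ F)).toReal / (μ F).toReal

/-- The jet `J` is mixing for the measure `μ`. -/
def MixingJet {Q : Type*} [MeasurableSpace Q] (μ : Measure (ℕ → Q)) (J : ℕ → Set Q) :
    Prop :=
  ∀ q q' : Q, ∀ qs : ℕ → Q, (∀ n, qs n ∈ J n) → ∀ m : ℕ,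
    (∃ L : ℝ, 0 < L ∧
      Tendsto (fun n => condProb μ {r | r n = qs n} {r | r m = q}) atTop (𝓝 L)) →
    (∃ L : ℝ, 0 < L ∧
      Tendsto (fun n => condProb μ {r | r n = qs n} {r | r m = q'}) atTop (𝓝 L)) →
    Tendsto (fun n =>
        condProb μ {r | r n = qs n} ({r | r n ∈ J n} ∩ {r | r m = q}) /
        condProb μ {r | r n = qs n} ({r | r n ∈ J n} ∩ {r | r m = q'}))
      atTop (𝓝 1)

end PAut

namespace PAut

section Aux
set_option linter.unusedSectionVars false

variable {Q : Type*} [Fintype Q] [DecidableEq Q] [MeasurableSpace Q]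
  [MeasurableSingletonClass Q] {A : Type*}

/-- Basic cylinder at level `n`. -/
def cylSet (n : ℕ) (f : Fin (n + 1) → Q) : Set (ℕ → Q) :=
  {r | ∀ i : Fin (n + 1), r i = f i}

/-- Event defined by a set of length-`(n+1)` prefixes. -/
def cylSetB (n : ℕ) (S : Set (Fin (n + 1) → Q)) : Set (ℕ → Q) :=
  {r | (fun i : Fin (n + 1) => r i) ∈ S}

/-- Future cylinder: coordinates `n, n+1, ..., n+m` are prescribed. -/
def futCyl (n m : ℕ) (g : Fin (m + 1) → Q) : Set (ℕ → Q) :=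
  {r | ∀ j : Fin (m + 1), r (n + (j : ℕ)) = g j}

lemma measurableSet_cylSet (n : ℕ) (f : Fin (n + 1) → Q) : MeasurableSet (cylSet n f) := by
  have h : cylSet n f = ⋂ i : Fin (n + 1), (fun r : ℕ → Q => r (i : ℕ)) ⁻¹' {f i} := by
    ext r; simp [cylSet]
  rw [h]
  exact MeasurableSet.iInter fun i => (measurable_pi_apply _) (measurableSet_singleton _)

lemma measurableSet_eqState (n : ℕ) (q : Q) : MeasurableSet {r : ℕ → Q | r n = q} := by
  have : {r : ℕ → Q | r n = q} = (fun r : ℕ → Q => r n) ⁻¹' {q} := by ext r; simp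
  rw [this]
  exact (measurable_pi_apply n) (measurableSet_singleton q)

lemma measurableSet_futCyl (n m : ℕ) (g : Fin (m + 1) → Q) : MeasurableSet (futCyl n m g) := by
  have h : futCyl n m g = ⋂ j : Fin (m + 1), (fun r : ℕ → Q => r (n + (j : ℕ))) ⁻¹' {g j} := by
    ext r; simp [futCyl]
  rw [h]
  exact MeasurableSet.iInter fun j => (measurable_pi_apply _) (measurableSet_singleton _)

lemma cylSetB_eq_iUnion (n : ℕ) (S : Set (Fin (n + 1) → Q)) :
    cylSetB n S = ⋃ h ∈ S, cylSet n h := by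
  ext r
  simp only [cylSetB, Set.mem_iUnion, Set.mem_setOf_eq, cylSet]
  constructor
  · intro hr; exact ⟨_, hr, fun i => rfl⟩
  · rintro ⟨h, hh, hr⟩
    have : (fun i : Fin (n + 1) => r i) = h := funext fun i => hr i
    rwa [this]

lemma measurableSet_cylSetB (n : ℕ) (S : Set (Fin (n + 1) → Q)) :
    MeasurableSet (cylSetB n S) := by
  rw [cylSetB_eq_iUnion]
  exact MeasurableSet.biUnion (Set.to_countable _) fun h _ => measurableSet_cylSet n h

/-- Lift a set of prefixes of length `n+1` to length `N+1` (meaningful when `n ≤ N`). -/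
def liftSet (n N : ℕ) (S : Set (Fin (n + 1) → Q)) : Set (Fin (N + 1) → Q) :=
  (fun h : Fin (N + 1) → Q => fun i : Fin (n + 1) => h ⟨min (i : ℕ) N, by omega⟩) ⁻¹' S

lemma cylSetB_liftSet {n N : ℕ} (hnN : n ≤ N) (S : Set (Fin (n + 1) → Q)) :
    cylSetB n S = cylSetB N (liftSet n N S) := by
  ext r
  simp only [cylSetB, liftSet, Set.mem_setOf_eq, Set.mem_preimage]
  have e : (fun i : Fin (n + 1) => r ((⟨min (i : ℕ) N, by omega⟩ : Fin (N + 1)) : ℕ)) =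
      fun i : Fin (n + 1) => r i := by
    funext i
    have : min (i : ℕ) N = (i : ℕ) := min_eq_left (by have := i.isLt; omega)
    simp [this]
  rw [e]

lemma cylSetB_biUnion {N : ℕ} {ι : Type*} (t : Finset ι) (Ss : ι → Set (Fin (N + 1) → Q)) :
    cylSetB N (⋃ i ∈ t, Ss i) = ⋃ i ∈ t, cylSetB N (Ss i) := by
  ext r
  simp [cylSetB]

lemma futureField_le_pi (n : ℕ) :
    futureField Q n ≤ (inferInstance : MeasurableSpace (ℕ → Q)) := by
  refine iSup_le fun k => iSup_le fun _ => ?_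
  exact measurable_iff_comap_le.mp (measurable_pi_apply k)

lemma tailField_le_pi :
    tailField Q ≤ (inferInstance : MeasurableSpace (ℕ → Q)) :=
  (iInf_le _ 0).trans (futureField_le_pi 0)

lemma cylProb_nonneg (T : FPT Q A) (w : ℕ → A) (n : ℕ) (f : Fin (n + 1) → Q) :
    0 ≤ cylProb T T.init w n f :=
  mul_nonneg (T.init_nonneg _) (Finset.prod_nonneg fun _ _ => T.M_nonneg _ _ _)

/-- Concatenation of a history of length `n+1` and a future of length `m+1`
  overlapping at position `n`. -/
def comb (n m : ℕ) (f : Fin (n + 1) → Q) (g : Fin (m + 1) → Q) : Fin (n + m + 1) → Q :=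
  fun i => if h : (i : ℕ) < n + 1 then f ⟨i, h⟩
    else g ⟨(i : ℕ) - n, by have := i.isLt; omega⟩

lemma comb_apply_lt (n m : ℕ) (f : Fin (n + 1) → Q) (g : Fin (m + 1) → Q)
    {i : ℕ} (h1 : i < n + 1) (h2 : i < n + m + 1) :
    comb n m f g ⟨i, h2⟩ = f ⟨i, h1⟩ := by
  simp only [comb, dif_pos h1]

lemma comb_apply_ge (n m : ℕ) (f : Fin (n + 1) → Q) (g : Fin (m + 1) → Q)
    (hfg : g 0 = f (Fin.last n)) {i : ℕ} (h1 : n ≤ i) (h2 : i < n + m + 1) :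
    comb n m f g ⟨i, h2⟩ = g ⟨i - n, by omega⟩ := by
  rcases eq_or_lt_of_le h1 with rfl | h
  · have h3 : n < n + 1 := by omega
    rw [comb_apply_lt n m f g h3 h2]
    have e2 : (⟨n - n, by omega⟩ : Fin (m + 1)) = 0 := by
      apply Fin.ext; simp
    rw [e2, hfg]
    rfl
  · simp only [comb, dif_neg (by omega : ¬ (i < n + 1))]

lemma futCyl_inter_cylSet (n m : ℕ) (f : Fin (n + 1) → Q) (g : Fin (m + 1) → Q)
    (hfg : g 0 = f (Fin.last n)) :
    futCyl n m g ∩ cylSet n f = cylSet (n + m) (comb n m f g) := by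
  ext r
  constructor
  · rintro ⟨hg, hf⟩ i
    rcases lt_or_ge (i : ℕ) (n + 1) with h | h
    · have : comb n m f g i = f ⟨i, h⟩ := by
        have := comb_apply_lt n m f g h i.isLt
        simpa using this
      rw [show i = ⟨(i : ℕ), i.isLt⟩ from rfl, comb_apply_lt n m f g h i.isLt]
      exact hf ⟨i, h⟩
    · rw [show i = ⟨(i : ℕ), i.isLt⟩ from rfl,
        comb_apply_ge n m f g hfg (by omega) i.isLt]
      have := hg ⟨(i : ℕ) - n, by have := i.isLt; omega⟩
      simpa [show n + ((i : ℕ) - n) = (i : ℕ) by omega] using this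
  · intro h
    constructor
    · intro j
      have hlt : n + (j : ℕ) < n + m + 1 := by have := j.isLt; omega
      have hh := h ⟨n + (j : ℕ), hlt⟩
      rw [comb_apply_ge n m f g hfg (by omega) hlt] at hh
      simpa [show n + (j : ℕ) - n = (j : ℕ) by omega] using hh
    · intro i
      have hlt : (i : ℕ) < n + m + 1 := by have := i.isLt; omega
      have hh := h ⟨(i : ℕ), hlt⟩
      rw [comb_apply_lt n m f g i.isLt hlt] at hh
      simpa using hh

/-- The transition weight of a future word. -/
noncomputable def futWeight (T : FPT Q A) (w : ℕ → A) (n m : ℕ) (g : Fin (m + 1) → Q) : ℝ :=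
  ∏ j : Fin m, T.M (w (n + (j : ℕ))) (g j.castSucc) (g j.succ)

lemma futWeight_nonneg (T : FPT Q A) (w : ℕ → A) (n m : ℕ) (g : Fin (m + 1) → Q) :
    0 ≤ futWeight T w n m g :=
  Finset.prod_nonneg fun _ _ => T.M_nonneg _ _ _

lemma cylProb_comb (T : FPT Q A) (w : ℕ → A) (n m : ℕ)
    (f : Fin (n + 1) → Q) (g : Fin (m + 1) → Q) (hfg : g 0 = f (Fin.last n)) :
    cylProb T T.init w (n + m) (comb n m f g) =
      cylProb T T.init w n f * futWeight T w n m g := by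
  unfold cylProb futWeight
  have h0 : comb n m f g 0 = f 0 := by
    have h1 : (0 : ℕ) < n + 1 := by omega
    have := comb_apply_lt n m f g h1 (by omega : (0:ℕ) < n + m + 1)
    simpa using this
  rw [h0]
  rw [Fin.prod_univ_add (f := fun i : Fin (n + m) =>
    T.M (w (i : ℕ)) (comb n m f g i.castSucc) (comb n m f g i.succ))]
  have hfst : ∀ i : Fin n,
      T.M (w ((Fin.castAdd m i : Fin (n + m)) : ℕ))
        (comb n m f g (Fin.castAdd m i).castSucc) (comb n m f g (Fin.castAdd m i).succ) =
      T.M (w (i : ℕ)) (f i.castSucc) (f i.succ) := by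
    intro i
    have hv : ((Fin.castAdd m i : Fin (n + m)) : ℕ) = (i : ℕ) := rfl
    have hc : comb n m f g (Fin.castAdd m i).castSucc = f i.castSucc := by
      have h1 : (i : ℕ) < n + 1 := by have := i.isLt; omega
      have := comb_apply_lt n m f g h1 (by have := i.isLt; omega : (i:ℕ) < n + m + 1)
      have e : (Fin.castAdd m i).castSucc = ⟨(i : ℕ), by have := i.isLt; omega⟩ := rfl
      rw [e, this]
      congr 1
    have hs : comb n m f g (Fin.castAdd m i).succ = f i.succ := by
      have h1 : (i : ℕ) + 1 < n + 1 := by have := i.isLt; omega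
      have e : (Fin.castAdd m i).succ = ⟨(i : ℕ) + 1, by have := i.isLt; omega⟩ := rfl
      rw [e, comb_apply_lt n m f g h1 (by have := i.isLt; omega)]
      congr 1
    rw [hv, hc, hs]
  have hsnd : ∀ j : Fin m,
      T.M (w ((Fin.natAdd n j : Fin (n + m)) : ℕ))
        (comb n m f g (Fin.natAdd n j).castSucc) (comb n m f g (Fin.natAdd n j).succ) =
      T.M (w (n + (j : ℕ))) (g j.castSucc) (g j.succ) := by
    intro j
    have hv : ((Fin.natAdd n j : Fin (n + m)) : ℕ) = n + (j : ℕ) := rfl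
    have hc : comb n m f g (Fin.natAdd n j).castSucc = g j.castSucc := by
      have e : (Fin.natAdd n j).castSucc = ⟨n + (j : ℕ), by have := j.isLt; omega⟩ := rfl
      rw [e, comb_apply_ge n m f g hfg (by omega) (by have := j.isLt; omega)]
      congr 1
      apply Fin.ext
      simp only [Fin.coe_castSucc]
      omega
    have hs : comb n m f g (Fin.natAdd n j).succ = g j.succ := by
      have e : (Fin.natAdd n j).succ = ⟨n + (j : ℕ) + 1, by have := j.isLt; omega⟩ := rfl
      rw [e, comb_apply_ge n m f g hfg (by omega) (by have := j.isLt; omega)]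
      congr 1
      apply Fin.ext
      simp only [Fin.val_succ]
      omega
    rw [hv, hc, hs]
  rw [Finset.prod_congr rfl (fun i _ => hfst i), Finset.prod_congr rfl (fun j _ => hsnd j)]
  ring

/-- Partition of any measurable event according to the history up to time `n`. -/
lemma measure_eq_sum_cyl (μ : Measure (ℕ → Q)) (n : ℕ) (E : Set (ℕ → Q))
    (hE : MeasurableSet E) :
    μ E = ∑ h : Fin (n + 1) → Q, μ (E ∩ cylSet n h) := by
  have hcover : E = ⋃ h : Fin (n + 1) → Q, E ∩ cylSet n h := by
    ext r
    simp only [Set.mem_iUnion, Set.mem_inter_iff]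
    constructor
    · intro hr; exact ⟨fun i => r i, hr, fun i => rfl⟩
    · rintro ⟨h, hr, _⟩; exact hr
  have hdisj : Pairwise (Function.onFun Disjoint fun h : Fin (n + 1) → Q => E ∩ cylSet n h) := by
    intro h h' hne
    refine Set.disjoint_left.mpr fun r hr hr' => hne ?_
    exact funext fun i => (hr.2 i).symm.trans (hr'.2 i)
  calc μ E = μ (⋃ h : Fin (n + 1) → Q, E ∩ cylSet n h) := by rw [← hcover]
    _ = ∑' h : Fin (n + 1) → Q, μ (E ∩ cylSet n h) :=
        measure_iUnion hdisj fun h => hE.inter (measurableSet_cylSet n h)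
    _ = ∑ h : Fin (n + 1) → Q, μ (E ∩ cylSet n h) := tsum_fintype _

lemma futureField_le_generateFrom (n : ℕ) :
    futureField Q n ≤ MeasurableSpace.generateFrom
      {s : Set (ℕ → Q) | ∃ (m : ℕ) (g : Fin (m + 1) → Q), s = futCyl n m g} := by
  refine iSup_le fun k => iSup_le fun hk => ?_
  rw [MeasurableSpace.comap_le_iff_le_map]
  intro s hs
  have : (fun r : ℕ → Q => r k) ⁻¹' s =
      ⋃ (g : Fin (k - n + 1) → Q) (_ : g (Fin.last (k - n)) ∈ s), futCyl n (k - n) g := by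
    ext r
    simp only [Set.mem_preimage, Set.mem_iUnion]
    constructor
    · intro hr
      refine ⟨fun j => r (n + (j : ℕ)), ?_, fun j => rfl⟩
      simpa [show n + (k - n) = k by omega] using hr
    · rintro ⟨g, hg, hr⟩
      have := hr (Fin.last (k - n))
      simp only [Fin.val_last] at this
      rw [show n + (k - n) = k by omega] at this
      rwa [this]
  rw [MeasurableSpace.map_def, this]
  exact MeasurableSet.iUnion fun g => MeasurableSet.iUnion fun _ =>
    MeasurableSpace.measurableSet_generateFrom ⟨k - n, g, rfl⟩

lemma isPiSystem_futCyl (n : ℕ) :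
    IsPiSystem {s : Set (ℕ → Q) | ∃ (m : ℕ) (g : Fin (m + 1) → Q), s = futCyl n m g} := by
  have key : ∀ (m₁ m₂ : ℕ) (g₁ : Fin (m₁ + 1) → Q) (g₂ : Fin (m₂ + 1) → Q), m₁ ≤ m₂ →
      (futCyl n m₁ g₁ ∩ futCyl n m₂ g₂).Nonempty →
      futCyl n m₁ g₁ ∩ futCyl n m₂ g₂ = futCyl n m₂ g₂ := by
    intro m₁ m₂ g₁ g₂ hm ⟨r, hr₁, hr₂⟩
    apply Set.inter_eq_self_of_subset_right
    intro r' hr' j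
    have h2 := hr₂ ⟨(j : ℕ), by have := j.isLt; omega⟩
    have h2' := hr' ⟨(j : ℕ), by have := j.isLt; omega⟩
    have h1 := hr₁ j
    rw [← h1]
    simp only at h2 h2' ⊢
    rw [h2', ← h2]
  rintro s ⟨m₁, g₁, rfl⟩ t ⟨m₂, g₂, rfl⟩ hne
  rcases le_total m₁ m₂ with hm | hm
  · rw [key m₁ m₂ g₁ g₂ hm hne]; exact ⟨m₂, g₂, rfl⟩
  · rw [Set.inter_comm] at hne ⊢
    rw [key m₂ m₁ g₂ g₁ hm hne]; exact ⟨m₁, g₁, rfl⟩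

lemma eqState_inter_cylSet_of {n : ℕ} {h : Fin (n + 1) → Q} {q : Q}
    (hh : h (Fin.last n) = q) :
    {r : ℕ → Q | r n = q} ∩ cylSet n h = cylSet n h := by
  apply Set.inter_eq_self_of_subset_right
  intro r hr
  show r n = q
  have e := hr (Fin.last n)
  simp only [Fin.val_last] at e
  rw [e, hh]

lemma eqState_inter_cylSet_of_ne {n : ℕ} {h : Fin (n + 1) → Q} {q : Q}
    (hh : ¬ h (Fin.last n) = q) :
    {r : ℕ → Q | r n = q} ∩ cylSet n h = ∅ := by
  ext r
  simp only [Set.mem_inter_iff, Set.mem_empty_iff_false, iff_false, not_and]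
  intro hr hr'
  apply hh
  have e := hr' (Fin.last n)
  simp only [Fin.val_last] at e
  rw [← e]; exact hr

end Aux

section Markov

set_option linter.unusedSectionVars false

variable {Q : Type*} [Fintype Q] [DecidableEq Q] [MeasurableSpace Q]
  [MeasurableSingletonClass Q] {A : Type*}

lemma meas_cylSet (T : FPT Q A) (w : ℕ → A) (μ : Measure (ℕ → Q))
    (hμ : IsMarkovMeasure T T.init w μ) (k : ℕ) (f : Fin (k + 1) → Q) :
    μ (cylSet k f) = ENNReal.ofReal (cylProb T T.init w k f) :=
  hμ.2 k f

/-- The Markov factorization: for an event `Γ` in the future field at time `n`,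
the past (a history cylinder) and the future are conditionally independent given
the state at time `n`. -/
lemma markov_factorization (T : FPT Q A) (w : ℕ → A) (μ : Measure (ℕ → Q))
    (hμ : IsMarkovMeasure T T.init w μ) (n : ℕ)
    (Γ : Set (ℕ → Q)) (hΓ : MeasurableSet[futureField Q n] Γ) (f : Fin (n + 1) → Q) :
    μ (Γ ∩ cylSet n f) * μ {r : ℕ → Q | r n = f (Fin.last n)} =
      μ (Γ ∩ {r : ℕ → Q | r n = f (Fin.last n)}) * μ (cylSet n f) := by
  haveI : IsProbabilityMeasure μ := hμ.1
  set 𝒞 : Set (Set (ℕ → Q)) :=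
    {s : Set (ℕ → Q) | ∃ (m : ℕ) (g : Fin (m + 1) → Q), s = futCyl n m g} with h𝒞
  have hle : MeasurableSpace.generateFrom 𝒞 ≤ (inferInstance : MeasurableSpace (ℕ → Q)) := by
    refine MeasurableSpace.generateFrom_le ?_
    rintro s ⟨m, g, rfl⟩
    exact measurableSet_futCyl n m g
  set q : Q := f (Fin.last n) with hq
  set Eq : Set (ℕ → Q) := {r : ℕ → Q | r n = q} with hEq
  have hEqm : MeasurableSet Eq := measurableSet_eqState n q
  have hCm : MeasurableSet (cylSet n f) := measurableSet_cylSet n f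
  -- the property to be proven by π-λ induction
  set P : Set (ℕ → Q) → Prop := fun Γ =>
    μ (Γ ∩ cylSet n f) * μ Eq = μ (Γ ∩ Eq) * μ (cylSet n f) with hP
  have hΓ' : MeasurableSet[MeasurableSpace.generateFrom 𝒞] Γ :=
    futureField_le_generateFrom n Γ hΓ
  have main : ∀ ⦃t : Set (ℕ → Q)⦄, MeasurableSet[MeasurableSpace.generateFrom 𝒞] t → P t := by
    refine MeasurableSpace.induction_on_inter (m := MeasurableSpace.generateFrom 𝒞)
      rfl (isPiSystem_futCyl n) ?_ ?_ ?_ ?_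
    · simp [hP]
    · -- basic: future cylinders
      rintro t ⟨m, g, rfl⟩
      by_cases hg0 : g 0 = q
      · have hμcomb : ∀ h : Fin (n + 1) → Q, h (Fin.last n) = q →
            μ (futCyl n m g ∩ cylSet n h) =
              ENNReal.ofReal (cylProb T T.init w n h * futWeight T w n m g) := by
          intro h hh
          have hg0h : g 0 = h (Fin.last n) := by rw [hh]; exact hg0
          rw [futCyl_inter_cylSet n m h g hg0h, meas_cylSet T w μ hμ (n + m) (comb n m h g),
            cylProb_comb T w n m h g hg0h]
        have hEqpart : μ Eq = ∑ h : Fin (n + 1) → Q,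
            (if h (Fin.last n) = q then ENNReal.ofReal (cylProb T T.init w n h) else 0) := by
          rw [measure_eq_sum_cyl μ n Eq hEqm]
          refine Finset.sum_congr rfl fun h _ => ?_
          by_cases hh : h (Fin.last n) = q
          · rw [if_pos hh, show Eq ∩ cylSet n h = cylSet n h from eqState_inter_cylSet_of hh,
              meas_cylSet T w μ hμ n h]
          · rw [if_neg hh, show Eq ∩ cylSet n h = ∅ from eqState_inter_cylSet_of_ne hh,
              measure_empty]
        have hFEpart : μ (futCyl n m g ∩ Eq) = ∑ h : Fin (n + 1) → Q,
            (if h (Fin.last n) = q then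
              ENNReal.ofReal (cylProb T T.init w n h * futWeight T w n m g) else 0) := by
          rw [measure_eq_sum_cyl μ n _ ((measurableSet_futCyl n m g).inter hEqm)]
          refine Finset.sum_congr rfl fun h _ => ?_
          by_cases hh : h (Fin.last n) = q
          · rw [if_pos hh, Set.inter_assoc,
              show Eq ∩ cylSet n h = cylSet n h from eqState_inter_cylSet_of hh,
              hμcomb h hh]
          · rw [if_neg hh, Set.inter_assoc,
              show Eq ∩ cylSet n h = ∅ from eqState_inter_cylSet_of_ne hh,
              Set.inter_empty, measure_empty]
        show μ (futCyl n m g ∩ cylSet n f) * μ Eq = μ (futCyl n m g ∩ Eq) * μ (cylSet n f)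
        rw [hμcomb f rfl, hEqpart, hFEpart, meas_cylSet T w μ hμ n f, Finset.sum_mul, Finset.mul_sum]
        refine Finset.sum_congr rfl fun h _ => ?_
        by_cases hh : h (Fin.last n) = q
        · rw [if_pos hh, if_pos hh, ENNReal.ofReal_mul (cylProb_nonneg T w n h),
            ENNReal.ofReal_mul (cylProb_nonneg T w n f)]
          ring
        · simp [hh]
      · -- incompatible: both sides vanish
        have h1 : futCyl n m g ∩ cylSet n f = ∅ := by
          ext r
          simp only [Set.mem_inter_iff, Set.mem_empty_iff_false, iff_false, not_and]
          intro hr hr'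
          have e1 := hr 0
          simp only [Fin.val_zero, Nat.add_zero] at e1
          have e2 := hr' (Fin.last n)
          rw [Fin.val_last] at e2
          exact hg0 (e1.symm.trans e2)
        have h2 : futCyl n m g ∩ Eq = ∅ := by
          ext r
          simp only [Set.mem_inter_iff, Set.mem_empty_iff_false, iff_false, not_and]
          intro hr hr'
          have e1 := hr 0
          simp only [Fin.val_zero, Nat.add_zero] at e1
          exact hg0 (e1.symm.trans hr')
        simp [hP, h1, h2]
    · -- complements
      intro t ht hPt
      have htm : MeasurableSet t := hle t ht
      have e1 : μ (t ∩ cylSet n f) + μ (tᶜ ∩ cylSet n f) = μ (cylSet n f) := by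
        rw [Set.inter_comm t, Set.inter_comm tᶜ, ← Set.diff_eq]
        exact measure_inter_add_diff _ htm
      have e2 : μ (t ∩ Eq) + μ (tᶜ ∩ Eq) = μ Eq := by
        rw [Set.inter_comm t, Set.inter_comm tᶜ, ← Set.diff_eq]
        exact measure_inter_add_diff _ htm
      have key : μ (t ∩ cylSet n f) * μ Eq + μ (tᶜ ∩ cylSet n f) * μ Eq =
          μ (t ∩ cylSet n f) * μ Eq + μ (tᶜ ∩ Eq) * μ (cylSet n f) := by
        rw [← add_mul, e1, hPt]
        rw [← add_mul, e2]
        ring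
      have hfin : μ (t ∩ cylSet n f) * μ Eq ≠ ⊤ :=
        ENNReal.mul_ne_top (measure_ne_top μ _) (measure_ne_top μ _)
      exact (ENNReal.add_right_inj hfin).mp key
    · -- countable disjoint unions
      intro g hdisj hgm hPg
      have hgm' : ∀ i, MeasurableSet (g i) := fun i => hle _ (hgm i)
      have e1 : μ ((⋃ i, g i) ∩ cylSet n f) = ∑' i, μ (g i ∩ cylSet n f) := by
        rw [Set.iUnion_inter]
        exact measure_iUnion (fun i j hij =>
          (hdisj hij).mono Set.inter_subset_left Set.inter_subset_left)
          (fun i => (hgm' i).inter hCm)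
      have e2 : μ ((⋃ i, g i) ∩ Eq) = ∑' i, μ (g i ∩ Eq) := by
        rw [Set.iUnion_inter]
        exact measure_iUnion (fun i j hij =>
          (hdisj hij).mono Set.inter_subset_left Set.inter_subset_left)
          (fun i => (hgm' i).inter hEqm)
      show μ ((⋃ i, g i) ∩ cylSet n f) * μ Eq = μ ((⋃ i, g i) ∩ Eq) * μ (cylSet n f)
      rw [e1, e2, ← ENNReal.tsum_mul_right, ← ENNReal.tsum_mul_right]
      exact tsum_congr fun i => hPg i
  exact main hΓ'

end Markov

section Approx

set_option linter.unusedSectionVars false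

variable {Q : Type*} [Fintype Q] [DecidableEq Q] [MeasurableSpace Q]
  [MeasurableSingletonClass Q]

lemma futCyl_zero_eq_cylSetB (m : ℕ) (g : Fin (m + 1) → Q) :
    futCyl 0 m g = cylSetB m ({g} : Set (Fin (m + 1) → Q)) := by
  ext r
  simp only [futCyl, cylSetB, Set.mem_setOf_eq, Set.mem_singleton_iff, funext_iff, Nat.zero_add]

/-- Any event of the product σ-field can be approximated by finite-level
cylinder events. -/
lemma approx_by_cylinders (μ : Measure (ℕ → Q)) [IsProbabilityMeasure μ]
    (Γ : Set (ℕ → Q)) (hΓ : MeasurableSet[futureField Q 0] Γ) :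
    ∀ ε : ENNReal, 0 < ε → ∃ (N : ℕ) (S : Set (Fin (N + 1) → Q)),
      μ (symmDiff Γ (cylSetB N S)) < ε := by
  have hle : MeasurableSpace.generateFrom
      {s : Set (ℕ → Q) | ∃ (m : ℕ) (g : Fin (m + 1) → Q), s = futCyl 0 m g} ≤
      (inferInstance : MeasurableSpace (ℕ → Q)) := by
    refine MeasurableSpace.generateFrom_le ?_
    rintro s ⟨m, g, rfl⟩
    exact measurableSet_futCyl 0 m g
  refine MeasurableSpace.induction_on_inter
    (m := MeasurableSpace.generateFrom
      {s : Set (ℕ → Q) | ∃ (m : ℕ) (g : Fin (m + 1) → Q), s = futCyl 0 m g})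
    (C := fun t _ => ∀ ε : ENNReal, 0 < ε → ∃ (N : ℕ) (S : Set (Fin (N + 1) → Q)),
      μ (symmDiff t (cylSetB N S)) < ε)
    rfl (isPiSystem_futCyl 0) ?_ ?_ ?_ ?_ Γ (futureField_le_generateFrom 0 Γ hΓ)
  · -- empty set
    intro ε hε
    refine ⟨0, ∅, ?_⟩
    have h1 : cylSetB 0 (∅ : Set (Fin 1 → Q)) = ∅ := by ext r; simp [cylSetB]
    rw [h1, symmDiff_self, Set.bot_eq_empty, measure_empty]
    exact hε
  · -- basic cylinders
    rintro t ⟨m, g, rfl⟩ ε hε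
    refine ⟨m, {g}, ?_⟩
    rw [← futCyl_zero_eq_cylSetB, symmDiff_self, Set.bot_eq_empty, measure_empty]
    exact hε
  · -- complements
    intro t _ hC ε hε
    obtain ⟨N, S, hNS⟩ := hC ε hε
    refine ⟨N, Sᶜ, ?_⟩
    have h1 : cylSetB N Sᶜ = (cylSetB N S)ᶜ := by ext r; simp [cylSetB]
    rwa [h1, compl_symmDiff_compl]
  · -- countable disjoint unions
    intro g hdisj hgm hC ε hε
    rcases eq_or_ne ε ⊤ with rfl | hεtop
    · exact ⟨0, ∅, (measure_lt_top μ _).trans_le le_top⟩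
    have hgm' : ∀ i, MeasurableSet (g i) := fun i => hle _ (hgm i)
    have htsum : ∑' i, μ (g i) ≠ ⊤ := by
      rw [← measure_iUnion hdisj hgm']
      exact measure_ne_top μ _
    have htail : ∃ k, ∑' j, μ (g (j + k)) < ε / 2 := by
      have := (ENNReal.tendsto_sum_nat_add (fun i => μ (g i)) htsum).eventually_lt_const
        (ENNReal.half_pos (ne_of_gt hε))
      exact this.exists
    obtain ⟨k, hk⟩ := htail
    -- approximate each of the first k sets
    set δ : ENNReal := ε / 2 / (k + 1) with hδ
    have hδpos : 0 < δ :=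
      ENNReal.div_pos (ne_of_gt (ENNReal.half_pos (ne_of_gt hε))) (by simp)
    have happrox : ∀ i : ℕ, ∃ (N : ℕ) (S : Set (Fin (N + 1) → Q)),
        μ (symmDiff (g i) (cylSetB N S)) < δ := fun i => hC i δ hδpos
    choose Ni Si hNS using happrox
    -- common level
    set N : ℕ := (Finset.range k).sup Ni with hN
    classical
    set Sbig : Set (Fin (N + 1) → Q) :=
      ⋃ i ∈ Finset.range k, liftSet (Ni i) N (Si i) with hSbig
    refine ⟨N, Sbig, ?_⟩
    have hBigeq : cylSetB N Sbig = ⋃ i ∈ Finset.range k, cylSetB (Ni i) (Si i) := by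
      rw [hSbig, cylSetB_biUnion]
      refine Set.iUnion₂_congr fun i hi => ?_
      exact (cylSetB_liftSet (Finset.le_sup hi) (Si i)).symm
    have hsub : symmDiff (⋃ i, g i) (cylSetB N Sbig) ⊆
        (⋃ j, g (j + k)) ∪ ⋃ i ∈ Finset.range k, symmDiff (g i) (cylSetB (Ni i) (Si i)) := by
      rw [hBigeq]
      intro r hr
      rcases hr with hr | hr
      · -- r ∈ (⋃ g i) \ big union
        obtain ⟨⟨_, ⟨i, rfl⟩, hri⟩, hrB⟩ := hr
        rcases lt_or_ge i k with hik | hik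
        · right
          refine Set.mem_biUnion (Finset.mem_range.mpr hik) ?_
          left
          refine ⟨hri, fun hrA => hrB ?_⟩
          exact Set.mem_biUnion (Finset.mem_range.mpr hik) hrA
        · left
          exact Set.mem_iUnion.mpr ⟨i - k, by rwa [Nat.sub_add_cancel hik]⟩
      · -- r ∈ big union \ (⋃ g i)
        obtain ⟨hrB, hrG⟩ := hr
        rw [Set.mem_iUnion₂] at hrB
        obtain ⟨i, hi, hri⟩ := hrB
        right
        refine Set.mem_biUnion hi ?_
        right
        exact ⟨hri, fun hgi => hrG (Set.mem_iUnion.mpr ⟨i, hgi⟩)⟩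
    calc μ (symmDiff (⋃ i, g i) (cylSetB N Sbig))
        ≤ μ ((⋃ j, g (j + k)) ∪ ⋃ i ∈ Finset.range k,
            symmDiff (g i) (cylSetB (Ni i) (Si i))) := measure_mono hsub
      _ ≤ μ (⋃ j, g (j + k)) +
            μ (⋃ i ∈ Finset.range k, symmDiff (g i) (cylSetB (Ni i) (Si i))) :=
          measure_union_le _ _
      _ ≤ (∑' j, μ (g (j + k))) + ∑ i ∈ Finset.range k,
            μ (symmDiff (g i) (cylSetB (Ni i) (Si i))) := by
          gcongr
          · exact measure_iUnion_le _
          · exact (measure_biUnion_finset_le _ _)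
      _ ≤ (∑' j, μ (g (j + k))) + ∑ _i ∈ Finset.range k, δ := by
          gcongr with i hi
          exact le_of_lt (hNS i)
      _ < ε / 2 + ε / 2 := by
          have hhalf : ε / 2 ≠ ⊤ := by
            simp [ENNReal.div_eq_top, hεtop]
          have hb : ∑ _i ∈ Finset.range k, δ ≤ ε / 2 := by
            calc ∑ _i ∈ Finset.range k, δ = (k : ENNReal) * δ := by
                  simp [Finset.sum_const, nsmul_eq_mul]
              _ ≤ ((k : ENNReal) + 1) * δ := by
                  gcongr
                  exact le_self_add
              _ ≤ ε / 2 := ENNReal.mul_div_le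
          exact ENNReal.add_lt_add_of_lt_of_le (ne_top_of_le_ne_top hhalf hb) hk hb
      _ = ε := ENNReal.add_halves ε

end Approx

section Main

set_option linter.unusedSectionVars false

variable {Q A : Type*} [Fintype Q] [DecidableEq Q] [MeasurableSpace Q]
  [MeasurableSingletonClass Q]

/-- The approximating set of states at time `n`. -/
noncomputable def Lset (μ : Measure (ℕ → Q)) (Γ : Set (ℕ → Q)) (n : ℕ) : Set Q :=
  {q : Q | μ ({r : ℕ → Q | r n = q} \ Γ) < μ (Γ ∩ {r : ℕ → Q | r n = q})}

lemma key_ineq (T : FPT Q A) (w : ℕ → A) (μ : Measure (ℕ → Q))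
    (hμ : IsMarkovMeasure T T.init w μ) (Γ : Set (ℕ → Q))
    (hΓ : MeasurableSet[tailField Q] Γ) (n : ℕ) (S : Set (Fin (n + 1) → Q)) :
    μ (symmDiff {r : ℕ → Q | r n ∈ Lset μ Γ n} Γ) ≤ μ (symmDiff Γ (cylSetB n S)) := by
  classical
  haveI : IsProbabilityMeasure μ := hμ.1
  have hΓamb : MeasurableSet Γ := tailField_le_pi Γ hΓ
  have htail : tailField Q ≤ futureField Q n := iInf_le _ n
  have hΓfut : MeasurableSet[futureField Q n] Γ := htail Γ hΓ
  set L : Set Q := Lset μ Γ n with hL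
  -- notations
  set Aq : Q → ENNReal := fun q => μ (Γ ∩ {r : ℕ → Q | r n = q}) with hAq
  set Bq : Q → ENNReal := fun q => μ ({r : ℕ → Q | r n = q} \ Γ) with hBq
  set mq : Q → ENNReal := fun q => if q ∈ L then Bq q else Aq q with hmq
  set th : (Fin (n + 1) → Q) → ENNReal := fun h =>
    if h ∈ S then μ (cylSet n h \ Γ) else μ (cylSet n h ∩ Γ) with hth
  -- Step 1 : decompose the left-hand side over the state at time n
  have step1 : μ (symmDiff {r : ℕ → Q | r n ∈ L} Γ) ≤ ∑ q : Q, mq q := by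
    have hcover : symmDiff {r : ℕ → Q | r n ∈ L} Γ ⊆
        ⋃ q : Q, (if q ∈ L then {r : ℕ → Q | r n = q} \ Γ
          else {r : ℕ → Q | r n = q} ∩ Γ) := by
      intro r hr
      rw [Set.mem_symmDiff] at hr
      refine Set.mem_iUnion.mpr ⟨r n, ?_⟩
      by_cases hq : r n ∈ L
      · rw [if_pos hq]
        rcases hr with ⟨_, hrΓ⟩ | ⟨_, hrS⟩
        · exact ⟨rfl, hrΓ⟩
        · exact absurd hq hrS
      · rw [if_neg hq]
        rcases hr with ⟨hrS, _⟩ | ⟨hrΓ, _⟩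
        · exact absurd hrS hq
        · exact ⟨rfl, hrΓ⟩
    refine (measure_mono hcover).trans ?_
    refine (measure_iUnion_le _).trans ?_
    rw [tsum_fintype]
    refine Finset.sum_le_sum fun q _ => ?_
    by_cases hq : q ∈ L
    · rw [if_pos hq, hmq]; simp only [if_pos hq]; exact le_refl _
    · rw [if_neg hq, hmq]; simp only [if_neg hq]
      exact le_of_eq (by rw [Set.inter_comm])
  -- Step 2 : decompose the right-hand side over the history up to time n
  have step2 : μ (symmDiff Γ (cylSetB n S)) = ∑ h : Fin (n + 1) → Q, th h := by
    rw [measure_eq_sum_cyl μ n _ (hΓamb.symmDiff (measurableSet_cylSetB n S))]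
    refine Finset.sum_congr rfl fun h _ => ?_
    have hmem : ∀ r ∈ cylSet n h, (r ∈ cylSetB n S ↔ h ∈ S) := by
      intro r hr
      have : (fun i : Fin (n + 1) => r i) = h := funext fun i => hr i
      simp [cylSetB, this]
    by_cases hhS : h ∈ S
    · rw [hth]; simp only [if_pos hhS]
      congr 1
      ext r
      rw [Set.mem_inter_iff, Set.mem_symmDiff]
      constructor
      · rintro ⟨⟨hrΓ, hrB⟩ | ⟨hrB, hrΓ⟩, hrc⟩
        · exact absurd ((hmem r hrc).mpr hhS) hrB
        · exact ⟨hrc, hrΓ⟩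
      · rintro ⟨hrc, hrΓ⟩
        exact ⟨Or.inr ⟨(hmem r hrc).mpr hhS, hrΓ⟩, hrc⟩
    · rw [hth]; simp only [if_neg hhS]
      congr 1
      ext r
      rw [Set.mem_inter_iff, Set.mem_symmDiff]
      constructor
      · rintro ⟨⟨hrΓ, hrB⟩ | ⟨hrB, hrΓ⟩, hrc⟩
        · exact ⟨hrc, hrΓ⟩
        · exact absurd hrB (fun hb => hhS ((hmem r hrc).mp hb))
      · rintro ⟨hrc, hrΓ⟩
        exact ⟨Or.inl ⟨hrΓ, fun hb => hhS ((hmem r hrc).mp hb)⟩, hrc⟩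
  -- Step 3 : fiberwise comparison
  have step3 : ∀ q : Q, mq q ≤
      ∑ h ∈ Finset.univ.filter (fun h : Fin (n + 1) → Q => h (Fin.last n) = q), th h := by
    intro q
    set Eq : Set (ℕ → Q) := {r : ℕ → Q | r n = q} with hEqdef
    have hEqm : MeasurableSet Eq := measurableSet_eqState n q
    have hE : μ (Γ ∩ Eq) + μ (Eq \ Γ) = μ Eq := by
      rw [Set.inter_comm]; exact measure_inter_add_diff Eq hΓamb
    -- the total mass of the fiber
    have hfibsum : ∑ h ∈ Finset.univ.filter
        (fun h : Fin (n + 1) → Q => h (Fin.last n) = q), μ (cylSet n h) = μ Eq := by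
      rw [Finset.sum_filter, measure_eq_sum_cyl μ n Eq hEqm]
      refine Finset.sum_congr rfl fun h _ => ?_
      by_cases hh : h (Fin.last n) = q
      · rw [if_pos hh, show Eq ∩ cylSet n h = cylSet n h from eqState_inter_cylSet_of hh]
      · rw [if_neg hh, show Eq ∩ cylSet n h = ∅ from eqState_inter_cylSet_of_ne hh,
          measure_empty]
    -- key per-history inequality : mq q * μ (cylSet n h) ≤ th h * μ Eq
    have hper : ∀ h : Fin (n + 1) → Q, h (Fin.last n) = q →
        mq q * μ (cylSet n h) ≤ th h * μ Eq := by
      intro h hh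
      have hmark := markov_factorization T w μ hμ n Γ hΓfut h
      rw [hh] at hmark
      -- hmark : μ (Γ ∩ cylSet n h) * μ Eq = μ (Γ ∩ Eq) * μ (cylSet n h)
      have hch : μ (cylSet n h ∩ Γ) + μ (cylSet n h \ Γ) = μ (cylSet n h) :=
        measure_inter_add_diff _ hΓamb
      have hba : Bq q * μ (cylSet n h ∩ Γ) = Aq q * μ (cylSet n h \ Γ) := by
        have e1 : μ (Γ ∩ cylSet n h) * (Aq q + Bq q) = Aq q * μ (cylSet n h) := by
          rw [hAq, hBq, hE]
          exact hmark
        rw [← hch, Set.inter_comm Γ _] at e1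
        have e2 : μ (cylSet n h ∩ Γ) * Aq q + μ (cylSet n h ∩ Γ) * Bq q =
            μ (cylSet n h ∩ Γ) * Aq q + μ (cylSet n h \ Γ) * Aq q := by
          rw [← mul_add, e1]
          ring
        have hfin : μ (cylSet n h ∩ Γ) * Aq q ≠ ⊤ :=
          ENNReal.mul_ne_top (measure_ne_top μ _) (measure_ne_top μ _)
        have := (ENNReal.add_right_inj hfin).mp e2
        rw [mul_comm] at this
        rw [this, mul_comm]
      have hAE : Aq q + Bq q = μ Eq := hE
      by_cases hhS : h ∈ S
      · -- th h = μ (cylSet n h \ Γ)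
        have hth' : th h = μ (cylSet n h \ Γ) := by rw [hth]; simp [hhS]
        have hmqB : mq q ≤ Bq q := by
          rw [hmq]
          by_cases hqL : q ∈ L
          · simp [hqL]
          · simp only [if_neg hqL]
            have : ¬ (Bq q < Aq q) := hqL
            exact le_of_not_gt this
        calc mq q * μ (cylSet n h) ≤ Bq q * μ (cylSet n h) := by gcongr
          _ = Bq q * μ (cylSet n h ∩ Γ) + Bq q * μ (cylSet n h \ Γ) := by
              rw [← mul_add, hch]
          _ = Aq q * μ (cylSet n h \ Γ) + Bq q * μ (cylSet n h \ Γ) := by rw [hba]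
          _ = μ (cylSet n h \ Γ) * (Aq q + Bq q) := by ring
          _ = th h * μ Eq := by rw [hAE, hth']
      · have hth' : th h = μ (cylSet n h ∩ Γ) := by rw [hth]; simp [hhS]
        have hmqA : mq q ≤ Aq q := by
          rw [hmq]
          by_cases hqL : q ∈ L
          · simp only [if_pos hqL]
            exact le_of_lt hqL
          · simp [hqL]
        calc mq q * μ (cylSet n h) ≤ Aq q * μ (cylSet n h) := by gcongr
          _ = Aq q * μ (cylSet n h ∩ Γ) + Aq q * μ (cylSet n h \ Γ) := by
              rw [← mul_add, hch]
          _ = Aq q * μ (cylSet n h ∩ Γ) + Bq q * μ (cylSet n h ∩ Γ) := by rw [hba]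
          _ = μ (cylSet n h ∩ Γ) * (Aq q + Bq q) := by ring
          _ = th h * μ Eq := by rw [hAE, hth']
    -- sum the per-history inequalities over the fiber
    rcases eq_or_ne (μ Eq) 0 with hE0 | hE0
    · have : mq q = 0 := by
        have h1 : mq q ≤ μ Eq := by
          rw [hmq]
          by_cases hqL : q ∈ L
          · simp only [if_pos hqL, hBq]
            exact (measure_mono Set.diff_subset).trans (le_of_eq rfl)
          · simp only [if_neg hqL, hAq]
            exact measure_mono Set.inter_subset_right
        exact le_antisymm (h1.trans_eq hE0) zero_le
      rw [this]
      exact zero_le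
    · have hsum : mq q * μ Eq ≤
          (∑ h ∈ Finset.univ.filter
            (fun h : Fin (n + 1) → Q => h (Fin.last n) = q), th h) * μ Eq := by
        calc mq q * μ Eq
            = mq q * ∑ h ∈ Finset.univ.filter
                (fun h : Fin (n + 1) → Q => h (Fin.last n) = q), μ (cylSet n h) := by
              rw [hfibsum]
          _ = ∑ h ∈ Finset.univ.filter
                (fun h : Fin (n + 1) → Q => h (Fin.last n) = q), mq q * μ (cylSet n h) := by
              rw [Finset.mul_sum]
          _ ≤ ∑ h ∈ Finset.univ.filter
                (fun h : Fin (n + 1) → Q => h (Fin.last n) = q), th h * μ Eq := by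
              refine Finset.sum_le_sum fun h hh => ?_
              exact hper h (Finset.mem_filter.mp hh).2
          _ = (∑ h ∈ Finset.univ.filter
                (fun h : Fin (n + 1) → Q => h (Fin.last n) = q), th h) * μ Eq := by
              rw [Finset.sum_mul]
      exact (ENNReal.mul_le_mul_iff_left hE0 (measure_ne_top μ _)).mp hsum
  -- assemble
  calc μ (symmDiff {r : ℕ → Q | r n ∈ L} Γ) ≤ ∑ q : Q, mq q := step1
    _ ≤ ∑ q : Q, ∑ h ∈ Finset.univ.filter
        (fun h : Fin (n + 1) → Q => h (Fin.last n) = q), th h :=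
        Finset.sum_le_sum fun q _ => step3 q
    _ = ∑ h : Fin (n + 1) → Q, th h := by
        rw [Finset.sum_fiberwise_eq_sum_filter Finset.univ Finset.univ
          (fun h : Fin (n + 1) → Q => h (Fin.last n)) th]
        simp
    _ = μ (symmDiff Γ (cylSetB n S)) := step2.symm

end Main

theorem stmt1 {Q A : Type*} [Fintype Q] [DecidableEq Q]
    [MeasurableSpace Q] [MeasurableSingletonClass Q]
    (T : FPT Q A) (w : ℕ → A) (μ : Measure (ℕ → Q))
    (hμ : IsMarkovMeasure T T.init w μ)
    (Γ : Set (ℕ → Q)) (hΓ : MeasurableSet[tailField Q] Γ) :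
    ∃ L : ℕ → Set Q,
      Tendsto (fun n => μ (symmDiff {r : ℕ → Q | r n ∈ L n} Γ)) atTop (𝓝 0) := by
  haveI : IsProbabilityMeasure μ := hμ.1
  refine ⟨fun n => Lset μ Γ n, ?_⟩
  rw [ENNReal.tendsto_atTop_zero]
  intro ε hε
  have htail0 : tailField Q ≤ futureField Q 0 := iInf_le _ 0
  have hΓ0 : MeasurableSet[futureField Q 0] Γ := htail0 Γ hΓ
  obtain ⟨N, S, hNS⟩ := approx_by_cylinders μ Γ hΓ0 ε hε
  refine ⟨N, fun n hn => ?_⟩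
  calc μ (symmDiff {r : ℕ → Q | r n ∈ Lset μ Γ n} Γ)
      ≤ μ (symmDiff Γ (cylSetB n (liftSet N n S))) :=
        key_ineq T w μ hμ Γ hΓ n (liftSet N n S)
    _ = μ (symmDiff Γ (cylSetB N S)) := by rw [← cylSetB_liftSet hn S]
    _ ≤ ε := le_of_lt hNS

end PAut
end

section
/- Let A be a probabilistic automaton with finite state space Q and let ε = ε(A) be its smallest nonzero transition probability. Then for every state q ∈ Q, every finite word ρ ∈ CRec(q), and every state q' in the support of δ(q,ρ), one has δ(q,ρ)(q') ≥ ε^(2^(2·|Q|)). -/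
open Filter Topology MeasureTheory

namespace PAut

section Stmt5Aux

variable {Q A : Type*} [Fintype Q] [DecidableEq Q]

lemma Mword_nonneg (T : FPT Q A) (l : List A) (x y : Q) : 0 ≤ Mword T l x y := by
  induction l generalizing x with
  | nil => unfold Mword; split <;> norm_num
  | cons a l ih => exact Finset.sum_nonneg fun z _ => mul_nonneg (T.M_nonneg a x z) (ih z)

lemma Mword_row (T : FPT Q A) (l : List A) (x : Q) : ∑ y, Mword T l x y = 1 := by
  induction l generalizing x with
  | nil => simp [Mword]
  | cons a l ih =>
    simp only [Mword]
    rw [Finset.sum_comm]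
    simp [← Finset.mul_sum, ih, T.M_row]

lemma Mword_single (T : FPT Q A) (a : A) (x y : Q) : Mword T [a] x y = T.M a x y := by
  simp [Mword]

lemma Mword_append (T : FPT Q A) (l₁ l₂ : List A) (x y : Q) :
    Mword T (l₁ ++ l₂) x y = ∑ z, Mword T l₁ x z * Mword T l₂ z y := by
  induction l₁ generalizing x with
  | nil => simp [Mword]
  | cons a l ih =>
    calc Mword T ((a :: l) ++ l₂) x y
        = ∑ z, T.M a x z * Mword T (l ++ l₂) z y := rfl
      _ = ∑ z, T.M a x z * ∑ w, Mword T l z w * Mword T l₂ w y :=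
          Finset.sum_congr rfl fun z _ => by rw [ih]
      _ = ∑ w, (∑ z, T.M a x z * Mword T l z w) * Mword T l₂ w y := by
          simp only [Finset.mul_sum, Finset.sum_mul, mul_assoc]
          rw [Finset.sum_comm]
      _ = ∑ z, Mword T (a :: l) x z * Mword T l₂ z y := rfl

lemma sum_pos_iff_exists {f : Q → ℝ} (h : ∀ x, 0 ≤ f x) :
    0 < ∑ x, f x ↔ ∃ x, 0 < f x := by
  constructor
  · intro hs
    by_contra hc
    push_neg at hc
    have h0 : ∑ x, f x = 0 := Finset.sum_eq_zero fun x _ => le_antisymm (hc x) (h x)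
    rw [h0] at hs
    exact lt_irrefl 0 hs
  · rintro ⟨x, hx⟩
    exact hx.trans_le (Finset.single_le_sum (fun y _ => h y) (Finset.mem_univ x))

lemma mul_pos_iff_nonneg {a b : ℝ} (ha : 0 ≤ a) (hb : 0 ≤ b) :
    0 < a * b ↔ 0 < a ∧ 0 < b := by
  refine ⟨fun h => ⟨?_, ?_⟩, fun h => mul_pos h.1 h.2⟩
  · rcases ha.eq_or_lt with h0 | h0
    · rw [← h0, zero_mul] at h; exact absurd h (lt_irrefl 0)
    · exact h0
  · rcases hb.eq_or_lt with h0 | h0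
    · rw [← h0, mul_zero] at h; exact absurd h (lt_irrefl 0)
    · exact h0

lemma Mword_append_pos (T : FPT Q A) (l₁ l₂ : List A) (x y : Q) :
    0 < Mword T (l₁ ++ l₂) x y ↔ ∃ z, 0 < Mword T l₁ x z ∧ 0 < Mword T l₂ z y := by
  rw [Mword_append,
    sum_pos_iff_exists (fun z => mul_nonneg (Mword_nonneg T l₁ x z) (Mword_nonneg T l₂ z y))]
  exact exists_congr fun z => mul_pos_iff_nonneg (Mword_nonneg T l₁ x z) (Mword_nonneg T l₂ z y)

lemma delta_nil (T : FPT Q A) (β : Q → ℝ) : delta T β [] = β := by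
  funext x; simp [delta, Mword]

lemma delta_append (T : FPT Q A) (β : Q → ℝ) (l₁ l₂ : List A) (x : Q) :
    delta T β (l₁ ++ l₂) x = ∑ t, delta T β l₁ t * Mword T l₂ t x := by
  simp only [delta, Mword_append, Finset.mul_sum, Finset.sum_mul, mul_assoc]
  rw [Finset.sum_comm]

lemma delta_nonneg (T : FPT Q A) {β : Q → ℝ} (hβ : ∀ x, 0 ≤ β x) (l : List A) (x : Q) :
    0 ≤ delta T β l x :=
  Finset.sum_nonneg fun t _ => mul_nonneg (hβ t) (Mword_nonneg T l t x)

lemma dirac_nonneg (y x : Q) : 0 ≤ dirac y x := by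
  unfold dirac; split <;> norm_num

lemma delta_dirac (T : FPT Q A) (y : Q) (l : List A) (x : Q) :
    delta T (dirac y) l x = Mword T l y x := by
  simp [delta, dirac, ite_mul]

lemma mem_supp_iff_pos {β : Q → ℝ} (hβ : ∀ x, 0 ≤ β x) (x : Q) :
    x ∈ supp β ↔ 0 < β x := by
  simp only [supp, Set.mem_setOf_eq]
  exact ⟨fun h => (hβ x).lt_of_ne (Ne.symm h), fun h => h.ne'⟩

lemma supp_delta_append (T : FPT Q A) {β : Q → ℝ} (hβ : ∀ x, 0 ≤ β x) (l₁ l₂ : List A) :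
    supp (delta T β (l₁ ++ l₂)) = act T (supp (delta T β l₁)) l₂ := by
  ext x
  rw [mem_supp_iff_pos (delta_nonneg T hβ _), delta_append,
    sum_pos_iff_exists (fun t => mul_nonneg (delta_nonneg T hβ _ t) (Mword_nonneg T l₂ t x))]
  simp only [act, Set.mem_setOf_eq]
  constructor
  · rintro ⟨t, ht⟩
    have h2 := (mul_pos_iff_nonneg (delta_nonneg T hβ _ t) (Mword_nonneg T l₂ t x)).mp ht
    exact ⟨t, (mem_supp_iff_pos (delta_nonneg T hβ _) t).mpr h2.1, h2.2⟩
  · rintro ⟨t, ht1, ht2⟩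
    exact ⟨t, mul_pos ((mem_supp_iff_pos (delta_nonneg T hβ _) t).mp ht1) ht2⟩

lemma minProb_nonneg (T : FPT Q A) : 0 ≤ minProb T :=
  Real.sInf_nonneg (fun _ hx => hx.1.le)

lemma minProb_le {T : FPT Q A} {a : A} {x y : Q} (h : 0 < T.M a x y) :
    minProb T ≤ T.M a x y :=
  csInf_le ⟨0, fun _ hz => hz.1.le⟩ ⟨h, a, x, y, rfl⟩

lemma minProb_le_one (T : FPT Q A) : minProb T ≤ 1 := by
  rcases Set.eq_empty_or_nonempty {x : ℝ | 0 < x ∧ ∃ a q q', T.M a q q' = x} with he | ⟨x, hx⟩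
  · rw [minProb, he, Real.sInf_empty]; norm_num
  · obtain ⟨hxpos, a, qq, qq', hM⟩ := hx
    have h1 : x ≤ 1 := by
      rw [← hM, ← T.M_row a qq]
      exact Finset.single_le_sum (fun z _ => T.M_nonneg a qq z) (Finset.mem_univ qq')
    exact le_trans (csInf_le ⟨0, fun _ hz => hz.1.le⟩ ⟨hxpos, a, qq, qq', hM⟩) h1

/-- Support of the distribution after reading the length-`m` prefix. -/
def Sset (T : FPT Q A) (q : Q) (ρ : List A) (m : ℕ) : Set Q :=
  supp (delta T (dirac q) (ρ.take m))

/-- Backward preimage of `{s}` (under the rest of the word) inside the support. -/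
def Tset (T : FPT Q A) (q s : Q) (ρ : List A) (m : ℕ) : Set Q :=
  {t | t ∈ Sset T q ρ m ∧ 0 < Mword T (ρ.drop m) t s}

/-- Mass of the backward preimage set. -/
noncomputable def fmass (T : FPT Q A) (q s : Q) (ρ : List A) (m : ℕ) : ℝ :=
  massOn (delta T (dirac q) (ρ.take m)) (Tset T q s ρ m)

lemma massOn_nonneg {β : Q → ℝ} (hβ : ∀ x, 0 ≤ β x) (F : Set Q) : 0 ≤ massOn β F := by
  rw [massOn]
  exact Finset.sum_nonneg fun x _ => by split <;> [exact hβ x; exact le_refl 0]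

lemma fmass_nonneg (T : FPT Q A) (q s : Q) (ρ : List A) (m : ℕ) :
    0 ≤ fmass T q s ρ m :=
  massOn_nonneg (fun x => delta_nonneg T (dirac_nonneg q) _ x) _

lemma Tset_char (T : FPT Q A) (q s : Q) (ρ : List A) {m j : ℕ} (hmj : m ≤ j) :
    Tset T q s ρ m =
      {t | t ∈ Sset T q ρ m ∧
        ∃ v ∈ Tset T q s ρ j, 0 < Mword T ((ρ.drop m).take (j - m)) t v} := by
  have hseg : (ρ.drop m).take (j - m) ++ ρ.drop j = ρ.drop m := by
    have hd : (ρ.drop m).drop (j - m) = ρ.drop j := by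
      rw [List.drop_drop]
      congr 1
      omega
    conv_rhs => rw [← List.take_append_drop (j - m) (ρ.drop m)]
    rw [hd]
  have htake : ρ.take m ++ (ρ.drop m).take (j - m) = ρ.take j := by
    rw [← List.take_add]
    congr 1
    omega
  have hSj : Sset T q ρ j = act T (Sset T q ρ m) ((ρ.drop m).take (j - m)) := by
    have h1 := supp_delta_append T (dirac_nonneg q) (ρ.take m) ((ρ.drop m).take (j - m))
    rw [htake] at h1
    exact h1
  ext t
  simp only [Tset, Set.mem_setOf_eq]
  constructor
  · rintro ⟨htS, hpos⟩
    rw [← hseg, Mword_append_pos] at hpos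
    obtain ⟨v, hv1, hv2⟩ := hpos
    refine ⟨htS, v, ⟨?_, hv2⟩, hv1⟩
    rw [hSj]
    exact ⟨t, htS, hv1⟩
  · rintro ⟨htS, v, ⟨_, hvpos⟩, hseg'⟩
    refine ⟨htS, ?_⟩
    rw [← hseg, Mword_append_pos]
    exact ⟨v, hseg', hvpos⟩

lemma ite_sum_zero {c : Prop} [Decidable c] {f : Q → ℝ} :
    (if c then ∑ t, f t else 0) = ∑ t, if c then f t else 0 := by
  split <;> simp

lemma fmass_step (T : FPT Q A) (q s : Q) (ρ : List A) {m : ℕ} (hm : m < ρ.length) :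
    minProb T * fmass T q s ρ m ≤ fmass T q s ρ (m + 1) := by
  classical
  set a := ρ.get ⟨m, hm⟩ with ha
  have htake : ρ.take (m + 1) = ρ.take m ++ [a] := by
    rw [List.take_succ]
    simp [List.getElem?_eq_getElem hm, ha]
  have hseg1 : (ρ.drop m).take (m + 1 - m) = [a] := by
    have h1 : m + 1 - m = 1 := by omega
    have hdd : ρ.drop m = ρ[m] :: ρ.drop (m + 1) := List.drop_eq_getElem_cons hm
    rw [h1, hdd, List.take_succ_cons, List.take_zero, ha, List.get_eq_getElem]
  have hchar := Tset_char T q s ρ (Nat.le_succ m)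
  rw [hseg1] at hchar
  have hβ' : ∀ u, delta T (dirac q) (ρ.take (m + 1)) u
      = ∑ t, delta T (dirac q) (ρ.take m) t * T.M a t u := by
    intro u
    rw [htake, delta_append]
    simp [Mword_single]
  rw [fmass, fmass, massOn, massOn]
  have hrw : ∀ u : Q, (if u ∈ Tset T q s ρ (m + 1) then delta T (dirac q) (ρ.take (m + 1)) u else 0)
      = ∑ t, (if u ∈ Tset T q s ρ (m + 1) then delta T (dirac q) (ρ.take m) t * T.M a t u else 0) := by
    intro u
    rw [hβ' u, ite_sum_zero]
  calc minProb T * ∑ t, (if t ∈ Tset T q s ρ m then delta T (dirac q) (ρ.take m) t else 0)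
      = ∑ t, (if t ∈ Tset T q s ρ m then minProb T * delta T (dirac q) (ρ.take m) t else 0) := by
        rw [Finset.mul_sum]
        exact Finset.sum_congr rfl fun t _ => by split <;> simp
    _ ≤ ∑ t, ∑ u, (if u ∈ Tset T q s ρ (m + 1) then delta T (dirac q) (ρ.take m) t * T.M a t u else 0) := by
        apply Finset.sum_le_sum
        intro t _
        by_cases ht : t ∈ Tset T q s ρ m
        · rw [if_pos ht]
          rw [hchar] at ht
          obtain ⟨_, v, hvT, hvpos⟩ := ht
          rw [Mword_single] at hvpos
          have hsum : ∑ u, (if u ∈ Tset T q s ρ (m + 1) then delta T (dirac q) (ρ.take m) t * T.M a t u else 0)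
              = delta T (dirac q) (ρ.take m) t * ∑ u, (if u ∈ Tset T q s ρ (m + 1) then T.M a t u else 0) := by
            rw [Finset.mul_sum]
            exact Finset.sum_congr rfl fun u _ => by split <;> simp
          rw [hsum, mul_comm (minProb T)]
          apply mul_le_mul_of_nonneg_left _ (delta_nonneg T (dirac_nonneg q) _ t)
          calc minProb T ≤ T.M a t v := minProb_le hvpos
            _ = (if v ∈ Tset T q s ρ (m + 1) then T.M a t v else 0) := by rw [if_pos hvT]
            _ ≤ ∑ u, (if u ∈ Tset T q s ρ (m + 1) then T.M a t u else 0) := by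
                apply Finset.single_le_sum (f := fun u => if u ∈ Tset T q s ρ (m + 1) then T.M a t u else 0)
                  (fun u _ => by split <;> [exact T.M_nonneg a t u; exact le_refl 0])
                  (Finset.mem_univ v)
        · rw [if_neg ht]
          exact Finset.sum_nonneg fun u _ => by
            split
            · exact mul_nonneg (delta_nonneg T (dirac_nonneg q) _ t) (T.M_nonneg a t u)
            · exact le_refl 0
    _ = ∑ u, ∑ t, (if u ∈ Tset T q s ρ (m + 1) then delta T (dirac q) (ρ.take m) t * T.M a t u else 0) :=
        Finset.sum_comm
    _ = ∑ u, (if u ∈ Tset T q s ρ (m + 1) then delta T (dirac q) (ρ.take (m + 1)) u else 0) :=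
        Finset.sum_congr rfl fun u _ => (hrw u).symm

lemma fmass_jump (T : FPT Q A) (q s : Q) (ρ : List A) (hcr : ChainRecFin T (dirac q) ρ)
    {i j : ℕ} (hij : i < j)
    (hS : Sset T q ρ i = Sset T q ρ j) (hT : Tset T q s ρ i = Tset T q s ρ j) :
    fmass T q s ρ i ≤ fmass T q s ρ j := by
  classical
  have hmj : i ≤ j := hij.le
  have htake : ρ.take i ++ (ρ.drop i).take (j - i) = ρ.take j := by
    rw [← List.take_add]
    congr 1
    omega
  set seg := (ρ.drop i).take (j - i) with hsegdef
  have hpre : (ρ.take i ++ seg) <+: ρ := by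
    rw [htake]
    exact List.take_prefix j ρ
  have hnred := hcr (ρ.take i) seg hpre
  have hact : act T (Sset T q ρ i) seg = Sset T q ρ i := by
    have h1 := supp_delta_append T (dirac_nonneg q) (ρ.take i) seg
    rw [htake] at h1
    exact h1.symm.trans hS.symm
  have hhash : hashSet T (Sset T q ρ i) seg = Sset T q ρ i := by
    by_contra hne
    exact hnred ⟨hact, hne⟩
  have hchar := Tset_char T q s ρ hmj
  rw [← hT] at hchar
  -- closure of Tset i under predecessors along stepRel-paths
  have hback : ∀ x y, Relation.ReflTransGen (stepRel T (Sset T q ρ i) seg) x y →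
      y ∈ Tset T q s ρ i → x ∈ Tset T q s ρ i := by
    intro x y hxy hyT
    induction hxy using Relation.ReflTransGen.head_induction_on with
    | refl => exact hyT
    | head h' _ ih =>
      rw [hchar]
      exact ⟨h'.1, _, ih, h'.2.2⟩
  -- closure of Tset i under successors (uses recurrence)
  have hfwd : ∀ t ∈ Tset T q s ρ i, ∀ u, 0 < Mword T seg t u → u ∈ Tset T q s ρ i := by
    intro t ht u hu
    have htS : t ∈ Sset T q ρ i := by rw [hchar] at ht; exact ht.1
    have huS : u ∈ Sset T q ρ i := by rw [← hact]; exact ⟨t, htS, hu⟩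
    have hstep : stepRel T (Sset T q ρ i) seg t u := ⟨htS, huS, hu⟩
    have htrec : t ∈ hashSet T (Sset T q ρ i) seg := by rw [hhash]; exact htS
    have hut := htrec.2 u (Relation.ReflTransGen.single hstep)
    exact hback u t hut ht
  have hrow : ∀ t ∈ Tset T q s ρ i,
      ∑ u, (if u ∈ Tset T q s ρ i then Mword T seg t u else 0) = 1 := by
    intro t ht
    rw [← Mword_row T seg t]
    apply Finset.sum_congr rfl
    intro u _
    by_cases hu : u ∈ Tset T q s ρ i
    · rw [if_pos hu]
    · rw [if_neg hu]
      by_contra h0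
      exact hu (hfwd t ht u ((Mword_nonneg T seg t u).lt_of_ne h0))
  have hβj : ∀ u, delta T (dirac q) (ρ.take j) u
      = ∑ t, delta T (dirac q) (ρ.take i) t * Mword T seg t u := by
    intro u
    rw [← htake, delta_append]
  rw [fmass, fmass, massOn, massOn, ← hT]
  calc ∑ t, (if t ∈ Tset T q s ρ i then delta T (dirac q) (ρ.take i) t else 0)
      ≤ ∑ t, delta T (dirac q) (ρ.take i) t *
          ∑ u, (if u ∈ Tset T q s ρ i then Mword T seg t u else 0) := by
        apply Finset.sum_le_sum
        intro t _
        by_cases ht : t ∈ Tset T q s ρ i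
        · rw [if_pos ht, hrow t ht, mul_one]
        · rw [if_neg ht]
          exact mul_nonneg (delta_nonneg T (dirac_nonneg q) _ t)
            (Finset.sum_nonneg fun u _ => by
              split <;> [exact Mword_nonneg T seg t u; exact le_refl 0])
    _ = ∑ t, ∑ u, (if u ∈ Tset T q s ρ i then delta T (dirac q) (ρ.take i) t * Mword T seg t u else 0) := by
        apply Finset.sum_congr rfl
        intro t _
        rw [Finset.mul_sum]
        exact Finset.sum_congr rfl fun u _ => by split <;> simp
    _ = ∑ u, ∑ t, (if u ∈ Tset T q s ρ i then delta T (dirac q) (ρ.take i) t * Mword T seg t u else 0) :=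
        Finset.sum_comm
    _ = ∑ u, (if u ∈ Tset T q s ρ i then delta T (dirac q) (ρ.take j) u else 0) := by
        apply Finset.sum_congr rfl
        intro u _
        rw [hβj u, ite_sum_zero]

lemma fmass_count (T : FPT Q A) (q s : Q) (ρ : List A) (hcr : ChainRecFin T (dirac q) ρ) :
    ∀ (k m : ℕ), m ≤ ρ.length →
      (@Finset.image _ _ (Classical.decEq _)
        (fun j => (Sset T q ρ j, Tset T q s ρ j)) (Finset.Icc m ρ.length)).card ≤ k →
      minProb T ^ k * fmass T q s ρ m ≤ fmass T q s ρ ρ.length := by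
  classical
  letI : DecidableEq (Set Q × Set Q) := Classical.decEq _
  intro k
  induction k with
  | zero =>
    intro m hm hcard
    exfalso
    have hmem : (Sset T q ρ m, Tset T q s ρ m) ∈
        @Finset.image _ _ (Classical.decEq _)
          (fun j => (Sset T q ρ j, Tset T q s ρ j)) (Finset.Icc m ρ.length) :=
      Finset.mem_image_of_mem _ (Finset.mem_Icc.mpr ⟨le_refl m, hm⟩)
    have hpos := Finset.card_pos.mpr ⟨_, hmem⟩
    omega
  | succ k ih =>
    intro m hm hcard
    set P : ℕ → Set Q × Set Q := fun j => (Sset T q ρ j, Tset T q s ρ j) with hP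
    set jset := (Finset.Icc m ρ.length).filter (fun j => P j = P m) with hjset
    have hmem : m ∈ jset := by
      rw [hjset, Finset.mem_filter, Finset.mem_Icc]
      exact ⟨⟨le_refl m, hm⟩, rfl⟩
    have hne : jset.Nonempty := ⟨m, hmem⟩
    set j := jset.max' hne with hj
    have hjmem : j ∈ jset := jset.max'_mem hne
    have hjmem2 : j ∈ Finset.Icc m ρ.length ∧ P j = P m := Finset.mem_filter.mp hjmem
    have hmj : m ≤ j := (Finset.mem_Icc.mp hjmem2.1).1
    have hjn : j ≤ ρ.length := (Finset.mem_Icc.mp hjmem2.1).2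
    have hPj : P j = P m := hjmem2.2
    have hfmj : fmass T q s ρ m ≤ fmass T q s ρ j := by
      rcases eq_or_lt_of_le hmj with heq | hlt
      · rw [heq]
      · have hSe : Sset T q ρ m = Sset T q ρ j := (congrArg Prod.fst hPj).symm
        have hTe : Tset T q s ρ m = Tset T q s ρ j := (congrArg Prod.snd hPj).symm
        exact fmass_jump T q s ρ hcr hlt hSe hTe
    rcases eq_or_lt_of_le hjn with hjn' | hjn'
    · have h1 : minProb T ^ (k + 1) ≤ 1 :=
        pow_le_one₀ (minProb_nonneg T) (minProb_le_one T)
      calc minProb T ^ (k + 1) * fmass T q s ρ m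
          ≤ 1 * fmass T q s ρ m := mul_le_mul_of_nonneg_right h1 (fmass_nonneg T q s ρ m)
        _ = fmass T q s ρ m := one_mul _
        _ ≤ fmass T q s ρ j := hfmj
        _ = fmass T q s ρ ρ.length := by rw [hjn']
    · have hstep := fmass_step T q s ρ hjn'
      have hnotmem : P m ∉ (Finset.Icc (j + 1) ρ.length).image P := by
        intro hmem'
        obtain ⟨j', hj'mem, hj'eq⟩ := Finset.mem_image.mp hmem'
        rw [Finset.mem_Icc] at hj'mem
        have hj'in : j' ∈ jset := by
          rw [hjset, Finset.mem_filter, Finset.mem_Icc]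
          exact ⟨⟨by omega, hj'mem.2⟩, hj'eq⟩
        have := jset.le_max' j' hj'in
        omega
      have hsub : insert (P m) ((Finset.Icc (j + 1) ρ.length).image P)
          ⊆ (Finset.Icc m ρ.length).image P := by
        apply Finset.insert_subset
        · exact Finset.mem_image_of_mem _ (Finset.mem_Icc.mpr ⟨le_refl m, hm⟩)
        · exact Finset.image_subset_image (Finset.Icc_subset_Icc (by omega) (le_refl _))
      have hcard' : ((Finset.Icc (j + 1) ρ.length).image P).card ≤ k := by
        have hc := Finset.card_le_card hsub
        rw [Finset.card_insert_of_notMem hnotmem] at hc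
        omega
      have hih := ih (j + 1) (by omega) hcard'
      have hε := minProb_nonneg T
      calc minProb T ^ (k + 1) * fmass T q s ρ m
          = minProb T ^ k * (minProb T * fmass T q s ρ m) := by ring
        _ ≤ minProb T ^ k * (minProb T * fmass T q s ρ j) :=
            mul_le_mul_of_nonneg_left (mul_le_mul_of_nonneg_left hfmj hε) (pow_nonneg hε k)
        _ ≤ minProb T ^ k * fmass T q s ρ (j + 1) :=
            mul_le_mul_of_nonneg_left hstep (pow_nonneg hε k)
        _ ≤ fmass T q s ρ ρ.length := hih

end Stmt5Aux

theorem stmt5 {Q A : Type*} [Fintype Q] [DecidableEq Q]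
    (T : FPT Q A) (q : Q) (ρ : List A)
    (h : ChainRecFin T (dirac q) ρ)
    (q' : Q) (hq' : q' ∈ supp (delta T (dirac q) ρ)) :
    minProb T ^ (2 ^ (2 * Fintype.card Q)) ≤ delta T (dirac q) ρ q' := by
  classical
  set n := ρ.length with hn
  have hq'pos : 0 < Mword T ρ q q' := by
    have h0 := (mem_supp_iff_pos (delta_nonneg T (dirac_nonneg q) ρ) q').mp hq'
    rwa [delta_dirac] at h0
  have hTn : Tset T q q' ρ n = {q'} := by
    ext t
    simp only [Tset, Set.mem_setOf_eq, hn, List.drop_length, Set.mem_singleton_iff]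
    constructor
    · rintro ⟨-, hpos⟩
      by_cases h : t = q'
      · exact h
      · exfalso
        unfold Mword at hpos
        rw [if_neg h] at hpos
        exact lt_irrefl 0 hpos
    · rintro rfl
      constructor
      · rw [Sset, List.take_length]
        exact hq'
      · unfold Mword
        rw [if_pos rfl]
        norm_num
  have hfn : fmass T q q' ρ n = delta T (dirac q) ρ q' := by
    rw [fmass, hTn, massOn, hn, List.take_length]
    rw [Finset.sum_eq_single q'
      (fun b _ hb => by rw [if_neg (fun h' => hb (Set.mem_singleton_iff.mp h'))])
      (fun hq'' => absurd (Finset.mem_univ q') hq'')]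
    rw [if_pos (Set.mem_singleton q')]
  have hT0 : q ∈ Tset T q q' ρ 0 := by
    refine ⟨?_, ?_⟩
    · show q ∈ supp (delta T (dirac q) (ρ.take 0))
      rw [List.take_zero, delta_nil]
      rw [mem_supp_iff_pos (dirac_nonneg q)]
      unfold dirac
      rw [if_pos rfl]
      norm_num
    · rw [List.drop_zero]
      exact hq'pos
  have hf0 : 1 ≤ fmass T q q' ρ 0 := by
    rw [fmass, massOn]
    have hle := Finset.single_le_sum
      (f := fun t => if t ∈ Tset T q q' ρ 0 then delta T (dirac q) (ρ.take 0) t else 0)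
      (fun t _ => by
        split
        · exact delta_nonneg T (dirac_nonneg q) _ t
        · exact le_refl 0)
      (Finset.mem_univ q)
    rw [if_pos hT0] at hle
    have hval : delta T (dirac q) (ρ.take 0) q = 1 := by
      rw [List.take_zero, delta_nil]
      unfold dirac
      rw [if_pos rfl]
    rwa [hval] at hle
  set K := 2 ^ (2 * Fintype.card Q) with hK
  letI : DecidableEq (Set Q × Set Q) := Classical.decEq _
  have hcard : ((Finset.Icc 0 n).image
      (fun j => (Sset T q ρ j, Tset T q q' ρ j))).card ≤ K := by
    have h1 := Finset.card_le_univ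
      ((Finset.Icc 0 n).image (fun j => (Sset T q ρ j, Tset T q q' ρ j)))
    rw [Fintype.card_prod, Fintype.card_set] at h1
    calc ((Finset.Icc 0 n).image (fun j => (Sset T q ρ j, Tset T q q' ρ j))).card
        ≤ 2 ^ Fintype.card Q * 2 ^ Fintype.card Q := h1
      _ = K := by rw [hK, ← pow_add, two_mul]
  have hmain := fmass_count T q q' ρ h K 0 (Nat.zero_le n) hcard
  calc minProb T ^ K = minProb T ^ K * 1 := (mul_one _).symm
    _ ≤ minProb T ^ K * fmass T q q' ρ 0 :=
        mul_le_mul_of_nonneg_left hf0 (pow_nonneg (minProb_nonneg T) K)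
    _ ≤ fmass T q q' ρ n := hmain
    _ = delta T (dirac q) ρ q' := hfn

end PAut
end
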